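/- Let α ∈ ℂ and write x = |α|². Define c : ℕ × ℕ → ℂ by c(j,l) = (e^{-x/2}/(1+e^{-x})) · α^{j+l} · 2^{-(j+l)/2} · √(Nat.choose (j+l) j / (j+l)!) · (1+(-1)^l) when j+l is even, and c(j,l) = 0 when j+l is odd. Then (i) c(j,l) = 0 whenever j is odd or l is odd, and (ii) Σ_{(j,l)∈ℕ×ℕ} |c(j,l)|² = 1. (This is the statement that for the even-coherent NOON state with correlated inputs x = y, both parties detect an even photon number with probability 1, i.e. P(0,0|0,0) = P(0,0|1,1) = 1 in the two-way communication protocol.) -/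

import Mathlib

open scoped BigOperators

/-- For the even-coherent NOON state with correlated inputs, the output Fock
coefficients vanish on odd photon numbers and the state is normalized:
both parties detect an even photon number with probability 1. -/
theorem even_coherent_NOON_correlated_parity
    (α : ℂ) (x : ℝ) (hx : x = ‖α‖ ^ 2)
    (c : ℕ × ℕ → ℂ)
    (hc_even : ∀ j l : ℕ, Even (j + l) →
      c (j, l) = ((Real.exp (-x / 2) / (1 + Real.exp (-x)) : ℝ) : ℂ) * α ^ (j + l) *
        (((2 : ℝ) ^ (-((j + l : ℕ) : ℝ) / 2) : ℝ) : ℂ) *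
        ((Real.sqrt ((Nat.choose (j + l) j : ℝ) / (Nat.factorial (j + l) : ℝ)) : ℝ) : ℂ) *
        (1 + (-1 : ℂ) ^ l))
    (hc_odd : ∀ j l : ℕ, Odd (j + l) → c (j, l) = 0) :
    (∀ j l : ℕ, (Odd j ∨ Odd l) → c (j, l) = 0) ∧
      ∑' p : ℕ × ℕ, ‖c p‖ ^ 2 = 1 := by
  have hK : (0:ℝ) < Real.exp (-x / 2) / (1 + Real.exp (-x)) := by positivity
  set K : ℝ := Real.exp (-x / 2) / (1 + Real.exp (-x)) with hKdef
  -- Part (i)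
  have part1 : ∀ j l : ℕ, (Odd j ∨ Odd l) → c (j, l) = 0 := by
    intro j l hjl
    rcases Nat.even_or_odd (j + l) with he | ho
    · have hlodd : Odd l := by
        rcases hjl with hj | hl
        · rw [← Nat.not_even_iff_odd] at hj ⊢
          exact fun hEl => hj ((Nat.even_add.mp he).mpr hEl)
        · exact hl
      rw [hc_even j l he, hlodd.neg_one_pow]
      ring
    · exact hc_odd j l ho
  refine ⟨part1, ?_⟩
  -- the even-index series
  set u : ℕ → ℝ := fun a => 2 * K * ((x/2) ^ (2*a) / (Nat.factorial (2*a) : ℝ)) with hu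
  have hsum_u : HasSum u 1 := by
    have h1 : HasSum (fun a : ℕ => (x/2) ^ (2*a) / (Nat.factorial (2*a) : ℝ)) (Real.cosh (x/2)) :=
      Real.hasSum_cosh (x/2)
    have h2 := h1.mul_left (2 * K)
    have hval : 2 * K * Real.cosh (x/2) = 1 := by
      rw [Real.cosh_eq, hKdef]
      have hpos : (1:ℝ) + Real.exp (-x) ≠ 0 := by positivity
      have e1 : Real.exp (-x/2) * Real.exp (x/2) = 1 := by
        rw [← Real.exp_add, show -x/2 + x/2 = 0 by ring, Real.exp_zero]
      have e2 : Real.exp (-x/2) * Real.exp (-x/2) = Real.exp (-x) := by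
        rw [← Real.exp_add]; congr 1; ring
      field_simp
      simp only [neg_div] at e1 e2 ⊢
      linear_combination e1 + e2
    rwa [hval] at h2
  have hu_nonneg : ∀ a, 0 ≤ u a := by
    intro a
    have h1 : (0:ℝ) ≤ (x/2) ^ (2*a) := by rw [pow_mul]; positivity
    have h2 := hK.le
    simp only [hu]
    positivity
  -- value of |c|^2 on doubled indices
  have key : ∀ a b : ℕ, ‖c (2*a, 2*b)‖ ^ 2 = u a * u b := by
    intro a b
    have heven : Even (2*a + 2*b) := ⟨a + b, by ring⟩
    rw [hc_even _ _ heven]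
    have habs : ‖α‖ ^ 2 = x := hx.symm
    have hxnn : (0:ℝ) ≤ x := hx ▸ by positivity
    set n : ℕ := 2*a + 2*b with hn
    have hle : 2*a ≤ n := by omega
    have hf1 : (Nat.factorial (2*a) : ℝ) ≠ 0 := Nat.cast_ne_zero.2 (Nat.factorial_ne_zero _)
    have hf2 : (Nat.factorial (2*b) : ℝ) ≠ 0 := Nat.cast_ne_zero.2 (Nat.factorial_ne_zero _)
    have hf3 : (Nat.factorial n : ℝ) ≠ 0 := Nat.cast_ne_zero.2 (Nat.factorial_ne_zero _)
    have hchoose : (Nat.choose n (2*a) : ℝ) / (Nat.factorial n : ℝ) =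
        ((Nat.factorial (2*a) : ℝ) * (Nat.factorial (2*b) : ℝ))⁻¹ := by
      have h := Nat.choose_mul_factorial_mul_factorial hle
      have hsub : n - 2*a = 2*b := by omega
      rw [hsub] at h
      have hcast := congrArg (Nat.cast : ℕ → ℝ) h
      push_cast at hcast
      field_simp
      linarith [hcast]
    have hsqrt : (0:ℝ) ≤ (Nat.choose n (2*a) : ℝ) / (Nat.factorial n : ℝ) := by positivity
    have hrpow : ((2:ℝ) ^ (-(n : ℝ) / 2)) ^ 2 = ((2:ℝ) ^ n)⁻¹ := by
      rw [← Real.rpow_natCast ((2:ℝ) ^ (-(n:ℝ)/2)) 2, ← Real.rpow_mul (by norm_num)]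
      rw [show -(n:ℝ)/2 * ((2:ℕ):ℝ) = -(n:ℝ) by push_cast; ring]
      rw [Real.rpow_neg (by norm_num), Real.rpow_natCast]
    have hpar : ((-1 : ℂ) ^ (2*b)) = 1 := by rw [pow_mul]; norm_num
    rw [hpar]
    simp only [norm_mul, Complex.norm_real, Real.norm_eq_abs, norm_pow]
    rw [show (1:ℂ) + 1 = 2 by norm_num]
    have h2 : ‖(2:ℂ)‖ = 2 := by norm_num
    rw [h2, abs_of_pos hK, abs_of_nonneg (Real.rpow_nonneg (by norm_num) _),
      abs_of_nonneg (Real.sqrt_nonneg _)]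
    rw [mul_pow, mul_pow, mul_pow, mul_pow, Real.sq_sqrt hsqrt, hrpow, hchoose]
    have hα : (‖α‖ ^ n) ^ 2 = x ^ n := by rw [← pow_mul, mul_comm, pow_mul, habs]
    rw [hα]
    simp only [hu, hn, div_pow]
    have h2n : ((2:ℝ) ^ (2*a+2*b)) ≠ 0 := by positivity
    field_simp
    ring
  -- reduce the sum to doubled indices
  have hbij : ∑' p : ℕ × ℕ, ‖c p‖ ^ 2 = ∑' q : ℕ × ℕ, u q.1 * u q.2 := by
    apply tsum_eq_tsum_of_ne_zero_bij
      (fun q : Function.support (fun q : ℕ × ℕ => u q.1 * u q.2) =>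
        ((2 * (q : ℕ × ℕ).1, 2 * (q : ℕ × ℕ).2) : ℕ × ℕ))
    · intro q1 q2 h
      apply Subtype.ext
      have h1 : 2 * (q1 : ℕ × ℕ).1 = 2 * (q2 : ℕ × ℕ).1 := congrArg Prod.fst h
      have h2 : 2 * (q1 : ℕ × ℕ).2 = 2 * (q2 : ℕ × ℕ).2 := congrArg Prod.snd h
      exact Prod.ext (by omega) (by omega)
    · rintro ⟨j, l⟩ hp
      simp only [Function.mem_support] at hp
      have hje : Even j := by
        by_contra hje
        exact hp (by rw [part1 j l (Or.inl (Nat.not_even_iff_odd.1 hje))]; simp)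
      have hle' : Even l := by
        by_contra hle'
        exact hp (by rw [part1 j l (Or.inr (Nat.not_even_iff_odd.1 hle'))]; simp)
      obtain ⟨a, ha⟩ := hje
      obtain ⟨b, hb⟩ := hle'
      have hja : j = 2 * a := by omega
      have hlb : l = 2 * b := by omega
      subst hja; subst hlb
      have hg : u a * u b ≠ 0 := by rw [← key a b]; exact hp
      exact ⟨⟨(a, b), hg⟩, rfl⟩
    · rintro ⟨⟨a, b⟩, hq⟩
      exact key a b
  rw [hbij]
  have hnorm : Summable fun a => ‖u a‖ := by
    have := hsum_u.summable
    simpa [Real.norm_eq_abs, abs_of_nonneg (hu_nonneg _)] using this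
  have hsummable : Summable (fun q : ℕ × ℕ => u q.1 * u q.2) :=
    summable_mul_of_summable_norm hnorm hnorm
  rw [← Summable.tsum_mul_tsum hsum_u.summable hsum_u.summable hsummable, hsum_u.tsum_eq]
  norm_num
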